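/- Let t ≥ 3 and let m, n, N be integers with t−1 ≤ n, 2 ≤ m ≤ N, 2 ≤ n ≤ N, and suppose that e(n,N) · 2^{−h_n(t)} < 1. Then c_t(m, n, N) ≤ (e(m,N) · 2^{−h_m(t)}) / (1 − e(n,N) · 2^{−h_n(t)}). -/

import Mathlib

/-- The set of `t`-chains in the Boolean lattice `B_n`: families of `t`
pairwise comparable (under inclusion) subsets of `[n]`. -/
def boolChains (n t : ℕ) : Finset (Finset (Finset (Fin n))) :=
  Finset.univ.filter (fun C => C.card = t ∧ ∀ A ∈ C, ∀ B ∈ C, A ⊆ B ∨ B ⊆ A)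

/-- `f` is a strong embedding of `B_m` into `B_N`. -/
def IsStrongEmb (m N : ℕ) (f : Finset (Fin m) → Finset (Fin N)) : Prop :=
  ∀ S T : Finset (Fin m), S ⊆ T ↔ f S ⊆ f T

/-- `e(m, N)`: the number of strong embeddings of `B_m` into `B_N`. -/
noncomputable def embCount (m N : ℕ) : ℕ :=
  Nat.card {f : Finset (Fin m) → Finset (Fin N) // IsStrongEmb m N f}

/-- A strong embedding `f` of `B_m` into `B_N` is embedded into the set `T`
of `t`-chains of `B_N` if the image of every `t`-chain of `B_m` belongs
to `T`. -/
def EmbeddedInto (t m N : ℕ) (T : Finset (Finset (Finset (Fin N))))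
    (f : Finset (Fin m) → Finset (Fin N)) : Prop :=
  ∀ C ∈ boolChains m t, C.image f ∈ T

/-- `e(m, T)`: the number of strong embeddings of `B_m` embedded into `T`. -/
noncomputable def embIntoCount (t m N : ℕ)
    (T : Finset (Finset (Finset (Fin N)))) : ℕ :=
  Nat.card {f : Finset (Fin m) → Finset (Fin N) //
    IsStrongEmb m N f ∧ EmbeddedInto t m N T f}

open Finset
open scoped Classical

section Aux

variable {m N t : ℕ}

lemma strongEmb_injective {f : Finset (Fin m) → Finset (Fin N)} (hf : IsStrongEmb m N f) :
    Function.Injective f := fun S T h =>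
  subset_antisymm ((hf S T).2 (by rw [h])) ((hf T S).2 (by rw [h]))

lemma mem_boolChains {C : Finset (Finset (Fin m))} :
    C ∈ boolChains m t ↔ C.card = t ∧ ∀ A ∈ C, ∀ B ∈ C, A ⊆ B ∨ B ⊆ A := by
  simp [boolChains]

lemma image_mem_boolChains {f : Finset (Fin m) → Finset (Fin N)} (hf : IsStrongEmb m N f)
    {C : Finset (Finset (Fin m))} (hC : C ∈ boolChains m t) :
    C.image f ∈ boolChains N t := by
  rw [mem_boolChains] at hC ⊢
  obtain ⟨hcard, hcomp⟩ := hC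
  refine ⟨by rw [Finset.card_image_of_injective _ (strongEmb_injective hf), hcard], ?_⟩
  intro A hA B hB
  simp only [Finset.mem_image] at hA hB
  obtain ⟨a, ha, rfl⟩ := hA; obtain ⟨b, hb, rfl⟩ := hB
  rcases hcomp a ha b hb with h | h
  · exact Or.inl ((hf a b).1 h)
  · exact Or.inr ((hf b a).1 h)

/-- The set of images of `t`-chains of `B_m` under `f`. -/
noncomputable def chainIm (t m N : ℕ) (f : Finset (Fin m) → Finset (Fin N)) :
    Finset (Finset (Finset (Fin N))) :=
  (boolChains m t).image (fun C => C.image f)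

lemma chainIm_subset {f : Finset (Fin m) → Finset (Fin N)} (hf : IsStrongEmb m N f) :
    chainIm t m N f ⊆ boolChains N t := by
  intro D hD
  simp only [chainIm, Finset.mem_image] at hD
  obtain ⟨C, hC, rfl⟩ := hD
  exact image_mem_boolChains hf hC

lemma chainIm_card {f : Finset (Fin m) → Finset (Fin N)} (hf : IsStrongEmb m N f) :
    (chainIm t m N f).card = (boolChains m t).card :=
  Finset.card_image_of_injective _ (Finset.image_injective (strongEmb_injective hf))

lemma embeddedInto_sdiff_iff {f : Finset (Fin m) → Finset (Fin N)} (hf : IsStrongEmb m N f)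
    {T : Finset (Finset (Finset (Fin N)))} :
    EmbeddedInto t m N (boolChains N t \ T) f ↔ Disjoint (chainIm t m N f) T := by
  constructor
  · intro h
    rw [Finset.disjoint_left]
    intro D hD
    simp only [chainIm, Finset.mem_image] at hD
    obtain ⟨C, hC, rfl⟩ := hD
    exact (Finset.mem_sdiff.1 (h C hC)).2
  · intro h C hC
    rw [Finset.mem_sdiff]
    refine ⟨image_mem_boolChains hf hC, ?_⟩
    exact Finset.disjoint_left.1 h (Finset.mem_image_of_mem _ hC)

lemma chainIm_subset_of_embeddedInto {f : Finset (Fin m) → Finset (Fin N)}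
    {T : Finset (Finset (Finset (Fin N)))} (h : EmbeddedInto t m N T f) :
    chainIm t m N f ⊆ T := by
  intro D hD
  simp only [chainIm, Finset.mem_image] at hD
  obtain ⟨C, hC, rfl⟩ := hD
  exact h C hC

lemma card_powerset_disjoint {α : Type*} [DecidableEq α] (𝒞 D : Finset α) (hD : D ⊆ 𝒞) :
    (𝒞.powerset.filter fun T => Disjoint D T).card = 2 ^ (𝒞.card - D.card) := by
  have h : 𝒞.powerset.filter (fun T => Disjoint D T) = (𝒞 \ D).powerset := by
    ext T
    simp only [Finset.mem_filter, Finset.mem_powerset, Finset.subset_sdiff]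
    tauto
  rw [h, Finset.card_powerset, Finset.card_sdiff_of_subset hD]

lemma card_powerset_superset {α : Type*} [DecidableEq α] (𝒞 D : Finset α) (hD : D ⊆ 𝒞) :
    (𝒞.powerset.filter fun T => D ⊆ T).card = 2 ^ (𝒞.card - D.card) := by
  rw [← Finset.card_sdiff_of_subset hD, ← Finset.card_powerset]
  apply Finset.card_bij' (fun T _ => T \ D) (fun T _ => T ∪ D)
  · intro T hT
    simp only [Finset.mem_filter, Finset.mem_powerset] at hT
    exact Finset.mem_powerset.2 (Finset.sdiff_subset_sdiff hT.1 subset_rfl)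
  · intro T hT
    simp only [Finset.mem_powerset, Finset.subset_sdiff] at hT
    simp only [Finset.mem_filter, Finset.mem_powerset]
    exact ⟨Finset.union_subset hT.1 hD, Finset.subset_union_right⟩
  · intro T hT
    simp only [Finset.mem_filter, Finset.mem_powerset] at hT
    exact Finset.sdiff_union_of_subset hT.2
  · intro T hT
    simp only [Finset.mem_powerset, Finset.subset_sdiff] at hT
    exact Finset.union_sdiff_cancel_right hT.2

lemma canonical_strongEmb (h : m ≤ N) :
    IsStrongEmb m N (fun S => S.image (Fin.castLE h)) := by
  intro S T
  exact (Finset.image_subset_image_iff (Fin.castLE_injective h)).symm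

lemma embCount_eq (m N : ℕ) :
    embCount m N = (Finset.univ.filter (IsStrongEmb m N)).card := by
  rw [embCount, Nat.card_eq_fintype_card, Fintype.card_subtype]

lemma embIntoCount_eq (t m N : ℕ) (T : Finset (Finset (Finset (Fin N)))) :
    embIntoCount t m N T =
      (Finset.univ.filter fun f => IsStrongEmb m N f ∧ EmbeddedInto t m N T f).card := by
  rw [embIntoCount, Nat.card_eq_fintype_card, Fintype.card_subtype]

lemma one_le_embCount (h : m ≤ N) : 1 ≤ embCount m N := by
  rw [embCount, Nat.one_le_iff_ne_zero, Nat.card_ne_zero]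
  exact ⟨⟨⟨_, canonical_strongEmb h⟩⟩, inferInstance⟩

lemma boolChains_card_le (h : m ≤ N) (t : ℕ) :
    (boolChains m t).card ≤ (boolChains N t).card := by
  rw [← chainIm_card (canonical_strongEmb h) (t := t)]
  exact Finset.card_le_card (chainIm_subset (canonical_strongEmb h))

end Aux

set_option maxHeartbeats 1600000 in
theorem stmt9 (t m n N : ℕ) (ht : 3 ≤ t) (hnt : t - 1 ≤ n)
    (hm : 2 ≤ m) (hmN : m ≤ N) (hn : 2 ≤ n) (hnN : n ≤ N)
    (hsmall : (embCount n N : ℝ) * (2 : ℝ) ^ (-((boolChains n t).card : ℤ)) < 1)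
    (c : ℝ)
    (hc : IsLeast {x : ℝ | ∃ T : Finset (Finset (Finset (Fin N))),
        T ⊆ boolChains N t ∧
        (¬ ∃ f : Finset (Fin n) → Finset (Fin N),
            IsStrongEmb n N f ∧ EmbeddedInto t n N T f) ∧
        x = (embIntoCount t m N (boolChains N t \ T) : ℝ) / (embCount m N : ℝ)} c) :
    c ≤ (embCount m N : ℝ) * (2 : ℝ) ^ (-((boolChains m t).card : ℤ)) /
        (1 - (embCount n N : ℝ) * (2 : ℝ) ^ (-((boolChains n t).card : ℤ))) := by
  classical
  obtain ⟨hmem, hlb⟩ := hc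
  obtain ⟨T₀, hT₀sub, hT₀good, hcT₀⟩ := hmem
  set 𝒞 := boolChains N t with h𝒞
  set K := 𝒞.card with hK
  set hM := (boolChains m t).card with hhMdef
  set hN := (boolChains n t).card with hhNdef
  have hc0 : 0 ≤ c := by rw [hcT₀]; positivity
  have hEm : 1 ≤ embCount m N := one_le_embCount hmN
  have hEmR : (0:ℝ) < embCount m N := by exact_mod_cast hEm
  have hhm : hM ≤ K := boolChains_card_le hmN t
  have hhn : hN ≤ K := boolChains_card_le hnN t
  set P := 𝒞.powerset with hP
  set Bad := P.filter (fun T => ∃ f, IsStrongEmb n N f ∧ EmbeddedInto t n N T f) with hBad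
  set Good := P.filter
    (fun T => ¬ ∃ f, IsStrongEmb n N f ∧ EmbeddedInto t n N T f) with hGood
  have hGB : Bad.card + Good.card = 2 ^ K := by
    rw [hBad, hGood, Finset.card_filter_add_card_filter_not, hP,
      Finset.card_powerset]
  -- total sum identity
  have hsum : ∑ T ∈ P, embIntoCount t m N (𝒞 \ T) = embCount m N * 2 ^ (K - hM) := by
    have : ∀ T ∈ P, embIntoCount t m N (𝒞 \ T) =
        ∑ f : Finset (Fin m) → Finset (Fin N),
          if IsStrongEmb m N f ∧ EmbeddedInto t m N (𝒞 \ T) f then 1 else 0 := by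
      intro T _
      rw [embIntoCount_eq, Finset.card_filter]
    rw [Finset.sum_congr rfl this, Finset.sum_comm]
    have hinner : ∀ f : Finset (Fin m) → Finset (Fin N),
        (∑ T ∈ P, if IsStrongEmb m N f ∧ EmbeddedInto t m N (𝒞 \ T) f then 1 else 0) =
        if IsStrongEmb m N f then 2 ^ (K - hM) else 0 := by
      intro f
      by_cases hf : IsStrongEmb m N f
      · simp only [hf, true_and, if_true]
        have : ∀ T ∈ P,
            (if EmbeddedInto t m N (𝒞 \ T) f then (1:ℕ) else 0) =
            (if Disjoint (chainIm t m N f) T then 1 else 0) := by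
          intro T _
          simp only [h𝒞, embeddedInto_sdiff_iff hf]
        rw [Finset.sum_congr rfl this, ← Finset.card_filter,
          card_powerset_disjoint 𝒞 _ (chainIm_subset hf), chainIm_card hf]
      · simp [hf]
    rw [Finset.sum_congr rfl (fun f _ => hinner f), ← Finset.sum_filter,
      Finset.sum_const, smul_eq_mul, ← embCount_eq]
  -- bad count bound
  have hbad : Bad.card ≤ embCount n N * 2 ^ (K - hN) := by
    have hsub : Bad ⊆ (Finset.univ.filter (IsStrongEmb n N)).biUnion
        (fun f => P.filter (fun T => chainIm t n N f ⊆ T)) := by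
      intro T hT
      simp only [hBad, Finset.mem_filter] at hT
      obtain ⟨hTP, f, hf, hemb⟩ := hT
      exact Finset.mem_biUnion.2 ⟨f, Finset.mem_filter.2 ⟨Finset.mem_univ f, hf⟩,
        Finset.mem_filter.2 ⟨hTP, chainIm_subset_of_embeddedInto hemb⟩⟩
    calc Bad.card ≤ _ := Finset.card_le_card hsub
      _ ≤ ∑ f ∈ Finset.univ.filter (IsStrongEmb n N),
            (P.filter (fun T => chainIm t n N f ⊆ T)).card := Finset.card_biUnion_le
      _ = ∑ f ∈ Finset.univ.filter (IsStrongEmb n N), 2 ^ (K - hN) := by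
          refine Finset.sum_congr rfl (fun f hf => ?_)
          rw [Finset.mem_filter] at hf
          rw [hP, card_powerset_superset 𝒞 _ (chainIm_subset hf.2), chainIm_card hf.2]
      _ = embCount n N * 2 ^ (K - hN) := by
          rw [Finset.sum_const, smul_eq_mul, ← embCount_eq]
  -- per-good-T bound
  have hgoodT : ∀ T ∈ Good, c * (embCount m N : ℝ) ≤ (embIntoCount t m N (𝒞 \ T) : ℝ) := by
    intro T hT
    rw [hGood, Finset.mem_filter, hP, Finset.mem_powerset] at hT
    have hx : c ≤ (embIntoCount t m N (𝒞 \ T) : ℝ) / (embCount m N : ℝ) :=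
      hlb ⟨T, hT.1, hT.2, rfl⟩
    rwa [le_div_iff₀ hEmR] at hx
  -- key inequality
  have key : c * (embCount m N : ℝ) * Good.card ≤ (embCount m N : ℝ) * 2 ^ (K - hM) := by
    calc c * (embCount m N : ℝ) * Good.card
        = ∑ _T ∈ Good, c * (embCount m N : ℝ) := by
          rw [Finset.sum_const, nsmul_eq_mul]; ring
      _ ≤ ∑ T ∈ Good, (embIntoCount t m N (𝒞 \ T) : ℝ) := Finset.sum_le_sum hgoodT
      _ ≤ ∑ T ∈ P, (embIntoCount t m N (𝒞 \ T) : ℝ) := by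
          refine Finset.sum_le_sum_of_subset_of_nonneg (Finset.filter_subset _ _) ?_
          intro T _ _; positivity
      _ = (embCount m N : ℝ) * 2 ^ (K - hM) := by
          rw [← Nat.cast_sum]
          exact_mod_cast congrArg (Nat.cast (R := ℝ)) hsum
  clear_value K hM hN
  set p : ℝ := (embCount n N : ℝ) * (2 : ℝ) ^ (-(hN : ℤ)) with hpdef
  have hpow : ∀ h : ℕ, h ≤ K → ((2:ℝ) ^ (K - h) : ℝ) = 2 ^ K * 2 ^ (-(h : ℤ)) := by
    intro h hh
    have h2 : (2:ℝ) ^ (K - h) * 2 ^ h = 2 ^ K := by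
      rw [← pow_add, Nat.sub_add_cancel hh]
    rw [zpow_neg, zpow_natCast]
    field_simp
    linarith [h2]
  have hBR : (Bad.card : ℝ) ≤ 2 ^ K * p := by
    have h1 : (Bad.card : ℝ) ≤ (embCount n N : ℝ) * 2 ^ (K - hN) := by
      exact_mod_cast hbad
    rw [hpow hN hhn] at h1
    rw [hpdef]; linarith
  have hGR : (2:ℝ) ^ K * (1 - p) ≤ Good.card := by
    have h2 : (Bad.card : ℝ) + Good.card = 2 ^ K := by exact_mod_cast hGB
    rw [mul_one_sub]
    linarith [hBR]
  have hckey : c * ((2:ℝ) ^ K * (1 - p)) ≤ 2 ^ K * 2 ^ (-(hM : ℤ)) := by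
    have h1 : c * (Good.card : ℝ) ≤ 2 ^ (K - hM) := by
      have h := key
      rw [mul_comm c (embCount m N : ℝ), mul_assoc] at h
      exact le_of_mul_le_mul_left h hEmR
    calc c * ((2:ℝ) ^ K * (1 - p)) ≤ c * Good.card := by
          exact mul_le_mul_of_nonneg_left hGR hc0
      _ ≤ 2 ^ (K - hM) := h1
      _ = 2 ^ K * 2 ^ (-(hM : ℤ)) := hpow hM hhm
  have h2K : (0:ℝ) < 2 ^ K := by positivity
  have h1p : (0:ℝ) < 1 - p := by rw [hpdef]; linarith [hsmall]
  rw [le_div_iff₀ h1p]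
  have hfin : c * (1 - p) ≤ 2 ^ (-(hM : ℤ)) := by
    have h := hckey
    rw [show c * ((2:ℝ) ^ K * (1 - p)) = (2:ℝ) ^ K * (c * (1 - p)) by ring] at h
    exact le_of_mul_le_mul_left h h2K
  have hle : (2:ℝ) ^ (-(hM : ℤ)) ≤ (embCount m N : ℝ) * 2 ^ (-(hM : ℤ)) := by
    have h1 : (1:ℝ) ≤ (embCount m N : ℝ) := by exact_mod_cast hEm
    have h2 : (0:ℝ) < (2:ℝ) ^ (-(hM : ℤ)) := zpow_pos (by norm_num) _
    nlinarith
  linarith
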